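/- Let n ≥ 2. There exist constants c > 0 and 0 < r₀ < 1 depending only on n such that for all 0 < σ < 1/2 and all 0 < δ < 1 with δ^σ ≤ 1/2, δ^{1-σ} ≤ 1/40 and δ^{1-2σ} ≤ 1/80, the following holds: for every t of the form t = 2qδ^{-2σ} with q ∈ ℕ, q ≤ (1/80)δ^{2σ-1}, writing X = {pδ^{-σ} : p ∈ ℕ, p ≤ (1/40)δ^{σ-1}} and A_t = {x ∈ ℝ^{n-1} : dist(x, X^{n-1}) ≤ r₀}, one has ∫_{A_t} |u(x,t)|² dx ≥ c ‖F‖_{L²(ℝ^{n-1})}². In other words, the mass of |u(·,t)|² on the section of the neighbourhood of Λ at height t accounts for a positive proportion of the conserved L² mass. -/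

import Mathlib

open Real MeasureTheory

/-- The function `g = ∑_{ℓ ∈ ℕ, 1 ≤ ℓ ≤ δ^{-σ}} χ_{(ℓδ^σ-δ, ℓδ^σ+δ)}` from Section 2. -/
noncomputable def g (δ σ : ℝ) (x : ℝ) : ℝ :=
  ∑ ℓ ∈ Finset.Icc 1 ⌊δ ^ (-σ)⌋₊,
    Set.indicator (Set.Ioo ((ℓ : ℝ) * δ ^ σ - δ) ((ℓ : ℝ) * δ ^ σ + δ)) (fun _ => (1 : ℝ)) x

/-- The solution `u(x,t) = ∫_{ℝ^{n-1}} e^{-πit|ξ|² + 2πi x·ξ} ∏_j g(ξ_j) dξ` of the free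
Schrödinger equation with Fourier data `F(ξ) = ∏_j g(ξ_j)`. -/
noncomputable def schrodingerSol (n : ℕ) (δ σ : ℝ)
    (x : EuclideanSpace ℝ (Fin (n-1))) (t : ℝ) : ℂ :=
  ∫ ξ : EuclideanSpace ℝ (Fin (n-1)),
    Complex.exp (((-(π * t * ‖ξ‖ ^ 2) + 2 * π * (inner ℝ x ξ : ℝ) : ℝ) : ℂ) * Complex.I)
      * ((∏ j, g δ σ (ξ j) : ℝ) : ℂ)

namespace Stmt8Aux

/-! ### Basic properties of `g` -/

lemma g_nonneg (δ σ x : ℝ) : 0 ≤ g δ σ x :=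
  Finset.sum_nonneg fun ℓ _ => Set.indicator_nonneg (fun _ _ => zero_le_one) x

lemma g_pos_elim (δ σ x : ℝ) (hx : g δ σ x ≠ 0) :
    ∃ ℓ ∈ Finset.Icc 1 ⌊δ ^ (-σ)⌋₊,
      x ∈ Set.Ioo ((ℓ : ℝ) * δ ^ σ - δ) ((ℓ : ℝ) * δ ^ σ + δ) := by
  by_contra h
  push_neg at h
  exact hx (Finset.sum_eq_zero fun ℓ hℓ => Set.indicator_of_notMem (h ℓ hℓ) _)

lemma measurable_g (δ σ : ℝ) : Measurable (g δ σ) := by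
  apply Finset.measurable_sum
  intro ℓ _
  exact (measurable_const).indicator measurableSet_Ioo

lemma integrable_g (δ σ : ℝ) : Integrable (g δ σ) := by
  apply integrable_finset_sum
  intro ℓ _
  rw [integrable_indicator_iff measurableSet_Ioo]
  exact integrableOn_const (by simp [Real.volume_Ioo])

lemma integral_g (δ σ : ℝ) (hδ0 : 0 ≤ δ) :
    ∫ x, g δ σ x = (⌊δ ^ (-σ)⌋₊ : ℝ) * (2 * δ) := by
  unfold g
  rw [integral_finset_sum]
  · have : ∀ ℓ ∈ Finset.Icc 1 ⌊δ ^ (-σ)⌋₊,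
        (∫ x, Set.indicator (Set.Ioo ((ℓ : ℝ) * δ ^ σ - δ) ((ℓ : ℝ) * δ ^ σ + δ))
          (fun _ => (1 : ℝ)) x) = 2 * δ := by
      intro ℓ _
      rw [integral_indicator_const _ measurableSet_Ioo]
      simp [Real.volume_Ioo]
      rw [max_eq_left (by linarith)]
      ring
    rw [Finset.sum_congr rfl this, Finset.sum_const, Nat.card_Icc]
    simp [nsmul_eq_mul]
  · intro ℓ _
    rw [integrable_indicator_iff measurableSet_Ioo]
    exact integrableOn_const (by simp [Real.volume_Ioo])

lemma g_eq_zero_or_one (δ σ : ℝ) (hδ0 : 0 < δ) (h2 : 2 * δ ≤ δ ^ σ) (x : ℝ) :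
    g δ σ x = 0 ∨ g δ σ x = 1 := by
  unfold g
  by_cases hx : ∃ ℓ₀ ∈ Finset.Icc 1 ⌊δ ^ (-σ)⌋₊,
      x ∈ Set.Ioo ((ℓ₀ : ℝ) * δ ^ σ - δ) ((ℓ₀ : ℝ) * δ ^ σ + δ)
  · obtain ⟨ℓ₀, hℓ₀, hxℓ₀⟩ := hx
    right
    rw [Finset.sum_eq_single_of_mem ℓ₀ hℓ₀]
    · simp [Set.indicator_of_mem hxℓ₀]
    · intro ℓ hℓ hne
      apply Set.indicator_of_notMem
      intro hxℓ
      obtain ⟨h1, h2'⟩ := hxℓ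
      obtain ⟨h3, h4⟩ := hxℓ₀
      have hpow : (0:ℝ) < δ ^ σ := Real.rpow_pos_of_pos hδ0 σ
      have h1a : (1:ℝ) ≤ |(ℓ:ℝ) - (ℓ₀:ℝ)| := by
        have h := Int.one_le_abs (sub_ne_zero.2 (show (ℓ:ℤ) ≠ ℓ₀ by exact_mod_cast hne))
        have h' := (@Int.cast_le ℝ _ _ _).2 h
        push_cast at h'
        exact h'
      have habs : |(ℓ:ℝ) - ℓ₀| * δ ^ σ < 2 * δ := by
        rw [← abs_of_pos hpow, ← abs_mul, abs_lt]
        constructor <;> nlinarith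
      have hge : δ ^ σ ≤ |(ℓ:ℝ) - ℓ₀| * δ ^ σ := by nlinarith
      linarith
  · push_neg at hx
    exact Or.inl (Finset.sum_eq_zero fun ℓ hℓ => Set.indicator_of_notMem (hx ℓ hℓ) _)

lemma g_sq (δ σ : ℝ) (hδ0 : 0 < δ) (h2 : 2 * δ ≤ δ ^ σ) (x : ℝ) :
    g δ σ x ^ 2 = g δ σ x := by
  rcases g_eq_zero_or_one δ σ hδ0 h2 x with h | h <;> rw [h] <;> norm_num

/-! ### The one-dimensional solution and factorization -/

noncomputable def u1 (δ σ t y : ℝ) : ℂ :=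
  ∫ η : ℝ, Complex.exp (((-(π * t * η ^ 2) + 2 * π * (y * η) : ℝ) : ℂ) * Complex.I)
    * ((g δ σ η : ℝ) : ℂ)

lemma euclid_integral_prod {𝕜 : Type*} [RCLike 𝕜] {m : ℕ} (f : Fin m → ℝ → 𝕜) :
    ∫ ξ : EuclideanSpace ℝ (Fin m), ∏ j, f j (ξ j) = ∏ j, ∫ s : ℝ, f j s := by
  rw [← MeasureTheory.integral_fintype_prod_eq_prod (ι := Fin m) f]
  have h := (EuclideanSpace.volume_preserving_symm_measurableEquiv_toLp (Fin m)).symm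
  rw [← h.integral_comp (MeasurableEquiv.measurableEmbedding _)]
  rfl

lemma factorization (n : ℕ) (δ σ t : ℝ) (x : EuclideanSpace ℝ (Fin (n-1))) :
    schrodingerSol n δ σ x t = ∏ j, u1 δ σ t (x j) := by
  unfold schrodingerSol u1
  rw [← euclid_integral_prod (fun j s =>
    Complex.exp (((-(π * t * s ^ 2) + 2 * π * (x j * s) : ℝ) : ℂ) * Complex.I)
      * ((g δ σ s : ℝ) : ℂ))]
  congr 1
  funext ξ
  have hnorm : ‖ξ‖ ^ 2 = ∑ j, (ξ j) ^ 2 := by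
    rw [EuclideanSpace.norm_eq, Real.sq_sqrt (Finset.sum_nonneg fun j _ => by positivity)]
    simp [sq_abs]
  have hinner : (inner ℝ x ξ : ℝ) = ∑ j, x j * ξ j := by
    simp [PiLp.inner_apply, RCLike.inner_apply, mul_comm]
  rw [hnorm, hinner]
  rw [Finset.prod_mul_distrib, ← Complex.exp_sum, ← Finset.sum_mul, ← Complex.ofReal_sum]
  have : -(π * t * ∑ j, (ξ j) ^ 2) + 2 * π * ∑ j, x j * ξ j
      = ∑ j, (-(π * t * (ξ j) ^ 2) + 2 * π * (x j * ξ j)) := by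
    rw [Finset.mul_sum, Finset.mul_sum, ← Finset.sum_neg_distrib, ← Finset.sum_add_distrib]
  rw [this, Complex.ofReal_prod]

/-! ### The phase estimate -/

set_option maxHeartbeats 1000000 in
lemma cos_phase (δ σ : ℝ) (hδ0 : 0 < δ) (hδ1 : δ < 1)
    (q : ℕ) (hq : (q:ℝ) ≤ 1/80 * δ ^ (2*σ-1)) (p : ℕ) (hp : (p:ℝ) ≤ 1/40 * δ ^ (σ-1))
    (d : ℝ) (hd : |d| ≤ 1/100) (ℓ : ℕ) (hℓ : (ℓ:ℝ) ≤ δ ^ (-σ)) (η : ℝ)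
    (hη : η ∈ Set.Ioo ((ℓ:ℝ) * δ ^ σ - δ) ((ℓ:ℝ) * δ ^ σ + δ)) :
    1/2 ≤ Real.cos (-(π * (2*(q:ℝ)*δ^(-(2*σ))) * η^2) + 2*π*(((p:ℝ)*δ^(-σ)+d)*η)) := by
  obtain ⟨ha, hb⟩ := hη
  set A := δ ^ σ with hAdef
  set B := δ ^ (-σ) with hBdef
  have hA0 : 0 < A := Real.rpow_pos_of_pos hδ0 σ
  have hB0 : 0 < B := Real.rpow_pos_of_pos hδ0 (-σ)
  have hmul : ∀ a b : ℝ, δ ^ a * δ ^ b = δ ^ (a+b) := fun a b => (Real.rpow_add hδ0 a b).symm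
  have hpow1 : ∀ a : ℝ, δ ^ a * δ = δ ^ (a+1) := fun a => by
    calc δ ^ a * δ = δ ^ a * δ ^ (1:ℝ) := by rw [Real.rpow_one]
      _ = δ ^ (a+1) := hmul a 1
  have hAB : A * B = 1 := by
    rw [hAdef, hBdef, hmul]; norm_num
  have h2σ : δ ^ (-(2*σ)) = B * B := by
    rw [hBdef, hmul]; ring_nf
  set e := η - (ℓ:ℝ) * A with hedef
  have he : |e| ≤ δ := abs_le.2 ⟨by simp only [hedef]; linarith, by simp only [hedef]; linarith⟩
  set k : ℤ := (p:ℤ) * ℓ - (q:ℤ) * ℓ^2 with hkdef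
  have hk : (k:ℝ) = (p:ℝ)*(ℓ:ℝ) - (q:ℝ)*(ℓ:ℝ)^2 := by push_cast [hkdef]; ring
  set R := -(4*π*(q:ℝ)*B*(ℓ:ℝ))*e + -(2*π*(q:ℝ)*(B*B))*e^2 + (2*π*(p:ℝ)*B)*e + (2*π)*(d*η)
    with hRdef
  have hθ : -(π * (2*(q:ℝ)*δ^(-(2*σ))) * η^2) + 2*π*(((p:ℝ)*B+d)*η) = R + (k:ℝ) * (2*π) := by
    rw [h2σ, hRdef]
    have hη' : η = (ℓ:ℝ) * A + e := by rw [hedef]; ring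
    rw [hη']
    linear_combination (-2*π*(q:ℝ)*(ℓ:ℝ)^2*(A*B+1) - 4*π*(q:ℝ)*B*(ℓ:ℝ)*e + 2*π*(p:ℝ)*(ℓ:ℝ)) * hAB
      + (-2*π) * hk
  rw [hθ, Real.cos_add_int_mul_two_pi]
  have key : ∀ c X x : ℝ, 0 ≤ c → |X| ≤ x → |c * X| ≤ c * x := fun c X x hc hX => by
    rw [abs_mul, abs_of_nonneg hc]; exact mul_le_mul_of_nonneg_left hX hc
  have hq0 : (0:ℝ) ≤ (q:ℝ) := Nat.cast_nonneg q
  have hp0 : (0:ℝ) ≤ (p:ℝ) := Nat.cast_nonneg p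
  have hℓ0 : (0:ℝ) ≤ (ℓ:ℝ) := Nat.cast_nonneg ℓ
  have hkey1 : δ^(2*σ-1) * B * B * δ = 1 := by
    rw [hBdef, hmul, hmul, hpow1, show 2*σ-1 + -σ + -σ + 1 = 0 by ring, Real.rpow_zero]
  have hkey2 : δ^(2*σ-1) * B * B * δ * δ = δ := by
    rw [hBdef, hmul, hmul, hpow1, hpow1, show 2*σ-1 + -σ + -σ + 1 + 1 = 1 by ring,
      Real.rpow_one]
  have hkey3 : δ^(σ-1) * B * δ = 1 := by
    rw [hBdef, hmul, hpow1, show σ-1 + -σ + 1 = 0 by ring, Real.rpow_zero]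
  have b1 : (q:ℝ)*B*(ℓ:ℝ)*δ ≤ 1/80 := by
    calc (q:ℝ)*B*(ℓ:ℝ)*δ ≤ (1/80*δ^(2*σ-1))*B*B*δ := by gcongr
      _ = 1/80 := by linear_combination (1/80) * hkey1
  have b2 : (q:ℝ)*(B*B)*(δ*δ) ≤ 1/80 := by
    calc (q:ℝ)*(B*B)*(δ*δ) ≤ (1/80*δ^(2*σ-1))*(B*B)*(δ*δ) := by gcongr
      _ = 1/80 * δ := by linear_combination (1/80) * hkey2
      _ ≤ 1/80 := by linarith
  have b3 : (p:ℝ)*B*δ ≤ 1/40 := by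
    calc (p:ℝ)*B*δ ≤ (1/40*δ^(σ-1))*B*δ := by gcongr
      _ = 1/40 := by linear_combination (1/40) * hkey3
  have hℓA : (ℓ:ℝ) * A ≤ 1 := by
    calc (ℓ:ℝ) * A ≤ B * A := by gcongr
      _ = 1 := by linarith [hAB]
  have hℓA0 : (0:ℝ) ≤ (ℓ:ℝ) * A := by positivity
  have hηabs : |η| ≤ 2 := by
    have h1 := (abs_le.1 he).1
    have h2 := (abs_le.1 he).2
    simp only [hedef] at h1 h2
    rw [abs_le]
    exact ⟨by linarith, by linarith⟩
  have hdη : |d * η| ≤ 1/50 := by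
    rw [abs_mul]
    calc |d| * |η| ≤ (1/100) * 2 := mul_le_mul hd hηabs (abs_nonneg η) (by norm_num)
      _ = 1/50 := by norm_num
  have t1 : |(4*π*(q:ℝ)*B*(ℓ:ℝ)) * e| ≤ π/20 := by
    refine (key _ _ _ (by positivity) he).trans ?_
    have := mul_le_mul_of_nonneg_left b1 (by positivity : (0:ℝ) ≤ 4*π)
    linarith
  have he2 : |e^2| ≤ δ*δ := by
    rw [abs_of_nonneg (sq_nonneg e), ← sq_abs]
    nlinarith [abs_nonneg e, he]
  have t2 : |(2*π*(q:ℝ)*(B*B)) * e^2| ≤ π/40 := by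
    refine (key _ _ _ (by positivity) he2).trans ?_
    have := mul_le_mul_of_nonneg_left b2 (by positivity : (0:ℝ) ≤ 2*π)
    linarith
  have t3 : |(2*π*(p:ℝ)*B) * e| ≤ π/20 := by
    refine (key _ _ _ (by positivity) he).trans ?_
    have := mul_le_mul_of_nonneg_left b3 (by positivity : (0:ℝ) ≤ 2*π)
    linarith
  have t4 : |(2*π) * (d*η)| ≤ π/25 := by
    refine (key _ _ _ (by positivity) hdη).trans ?_
    linarith [pi_pos]
  have habs4 : ∀ a b c d : ℝ, |a+b+c+d| ≤ |a|+|b|+|c|+|d| := fun a b c d => by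
    calc |a+b+c+d| ≤ |a+b+c| + |d| := abs_add_le _ _
      _ ≤ (|a+b| + |c|) + |d| := by linarith [abs_add_le (a+b) c]
      _ ≤ (|a| + |b| + |c|) + |d| := by linarith [abs_add_le a b]
      _ = |a|+|b|+|c|+|d| := by ring
  have hR3 : |R| ≤ π/3 := by
    rw [hRdef]
    refine (habs4 _ _ _ _).trans ?_
    rw [neg_mul, abs_neg, neg_mul (2*π*(q:ℝ)*(B*B)), abs_neg]
    linarith [t1, t2, t3, t4, pi_pos]
  calc (1:ℝ)/2 = Real.cos (π/3) := by rw [Real.cos_pi_div_three]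
    _ ≤ Real.cos |R| := Real.cos_le_cos_of_nonneg_of_le_pi (abs_nonneg R)
        (by linarith [pi_pos]) hR3
    _ = Real.cos R := Real.cos_abs R

/-! ### Bounds on `u1` -/

lemma aesm_integrand (δ σ t y : ℝ) :
    AEStronglyMeasurable (fun η : ℝ =>
      Complex.exp (((-(π * t * η ^ 2) + 2 * π * (y * η) : ℝ) : ℂ) * Complex.I)
        * ((g δ σ η : ℝ) : ℂ)) volume := by
  apply AEStronglyMeasurable.mul
  · apply Continuous.aestronglyMeasurable
    fun_prop
  · exact (Complex.measurable_ofReal.comp (measurable_g δ σ)).aestronglyMeasurable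

lemma norm_integrand (δ σ t y η : ℝ) :
    ‖Complex.exp (((-(π * t * η ^ 2) + 2 * π * (y * η) : ℝ) : ℂ) * Complex.I)
        * ((g δ σ η : ℝ) : ℂ)‖ = g δ σ η := by
  rw [norm_mul, Complex.norm_exp_ofReal_mul_I, one_mul,
    Complex.norm_real, Real.norm_eq_abs, abs_of_nonneg (g_nonneg δ σ η)]

lemma integrable_integrand (δ σ t y : ℝ) :
    Integrable (fun η : ℝ =>
      Complex.exp (((-(π * t * η ^ 2) + 2 * π * (y * η) : ℝ) : ℂ) * Complex.I)
        * ((g δ σ η : ℝ) : ℂ)) := by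
  apply Integrable.mono' (integrable_g δ σ) (aesm_integrand δ σ t y)
  exact Filter.Eventually.of_forall fun η => le_of_eq (norm_integrand δ σ t y η)

lemma u1_norm_le (δ σ t y : ℝ) (hδ0 : 0 ≤ δ) :
    ‖u1 δ σ t y‖ ≤ (⌊δ ^ (-σ)⌋₊ : ℝ) * (2 * δ) := by
  rw [u1, ← integral_g δ σ hδ0]
  exact norm_integral_le_of_norm_le (integrable_g δ σ)
    (Filter.Eventually.of_forall fun η => le_of_eq (norm_integrand δ σ t y η))

lemma re_integrand (δ σ t y η : ℝ) :
    (Complex.exp (((-(π * t * η ^ 2) + 2 * π * (y * η) : ℝ) : ℂ) * Complex.I)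
      * ((g δ σ η : ℝ) : ℂ)).re
    = Real.cos (-(π * t * η ^ 2) + 2 * π * (y * η)) * g δ σ η := by
  rw [Complex.mul_re, Complex.ofReal_re, Complex.ofReal_im, mul_zero, sub_zero,
      Complex.exp_ofReal_mul_I_re]

lemma u1_re_lower (δ σ : ℝ) (hδ0 : 0 < δ) (hδ1 : δ < 1)
    (q : ℕ) (hq : (q:ℝ) ≤ 1/80 * δ ^ (2*σ-1)) (p : ℕ) (hp : (p:ℝ) ≤ 1/40 * δ ^ (σ-1))
    (d : ℝ) (hd : |d| ≤ 1/100) :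
    δ * (⌊δ ^ (-σ)⌋₊ : ℝ) ≤ (u1 δ σ (2*(q:ℝ)*δ^(-(2*σ))) ((p:ℝ)*δ^(-σ)+d)).re := by
  set t := 2*(q:ℝ)*δ^(-(2*σ)) with ht
  set y := (p:ℝ)*δ^(-σ)+d with hy
  have hint := integrable_integrand δ σ t y
  have hre : (u1 δ σ t y).re
      = ∫ η : ℝ, Real.cos (-(π * t * η ^ 2) + 2 * π * (y * η)) * g δ σ η := by
    rw [u1, ← RCLike.re_to_complex, ← _root_.integral_re hint]
    congr 1
    funext η
    rw [RCLike.re_to_complex, re_integrand]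
  rw [hre]
  have hmono : ∫ η : ℝ, (1/2) * g δ σ η
      ≤ ∫ η : ℝ, Real.cos (-(π * t * η ^ 2) + 2 * π * (y * η)) * g δ σ η := by
    apply integral_mono ((integrable_g δ σ).const_mul (1/2))
    · have : Integrable (fun η : ℝ => (Complex.exp (((-(π * t * η ^ 2) + 2 * π * (y * η) : ℝ) : ℂ)
          * Complex.I) * ((g δ σ η : ℝ) : ℂ)).re) := hint.re
      apply this.congr
      apply Filter.Eventually.of_forall
      intro η
      exact re_integrand δ σ t y η
    · intro η
      rcases eq_or_lt_of_le (g_nonneg δ σ η) with h | h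
      · show 1/2 * g δ σ η ≤ Real.cos (-(π * t * η ^ 2) + 2 * π * (y * η)) * g δ σ η
        rw [← h]; simp
      · obtain ⟨ℓ, hℓmem, hℓη⟩ := g_pos_elim δ σ η (ne_of_gt h)
        have hℓle : (ℓ:ℝ) ≤ δ ^ (-σ) := by
          have h1 : ℓ ≤ ⌊δ ^ (-σ)⌋₊ := (Finset.mem_Icc.1 hℓmem).2
          exact le_trans (Nat.cast_le.2 h1) (Nat.floor_le (Real.rpow_nonneg hδ0.le _))
        have := cos_phase δ σ hδ0 hδ1 q hq p hp d hd ℓ hℓle η hℓη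
        rw [ht, hy]
        exact mul_le_mul_of_nonneg_right this h.le
  refine le_trans (le_of_eq ?_) hmono
  rw [integral_const_mul, integral_g δ σ hδ0.le]
  ring

lemma u1_norm_lower (δ σ : ℝ) (hδ0 : 0 < δ) (hδ1 : δ < 1)
    (q : ℕ) (hq : (q:ℝ) ≤ 1/80 * δ ^ (2*σ-1)) (p : ℕ) (hp : (p:ℝ) ≤ 1/40 * δ ^ (σ-1))
    (d : ℝ) (hd : |d| ≤ 1/100) :
    δ * (⌊δ ^ (-σ)⌋₊ : ℝ) ≤ ‖u1 δ σ (2*(q:ℝ)*δ^(-(2*σ))) ((p:ℝ)*δ^(-σ)+d)‖ :=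
  le_trans (u1_re_lower δ σ hδ0 hδ1 q hq p hp d hd)
    (le_trans (Complex.re_le_norm _) (le_of_eq rfl))

lemma u1_continuous (δ σ t : ℝ) : Continuous (fun y => u1 δ σ t y) := by
  unfold u1
  apply MeasureTheory.continuous_of_dominated
  · intro y; exact aesm_integrand δ σ t y
  · intro y
    exact Filter.Eventually.of_forall fun η => le_of_eq (norm_integrand δ σ t y η)
  · exact integrable_g δ σ
  · apply Filter.Eventually.of_forall
    intro η
    apply Continuous.mul _ continuous_const
    apply Complex.continuous_exp.comp
    apply Continuous.mul _ continuous_const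
    exact Complex.continuous_ofReal.comp (by fun_prop)

end Stmt8Aux

open Stmt8Aux in
set_option maxHeartbeats 1000000 in
theorem stmt8 (n : ℕ) (hn : 2 ≤ n) :
    ∃ c r₀ : ℝ, 0 < c ∧ 0 < r₀ ∧ r₀ < 1 ∧
      ∀ σ δ : ℝ, 0 < σ → σ < 1/2 → 0 < δ → δ < 1 →
        δ ^ σ ≤ 1/2 → δ ^ (1 - σ) ≤ 1/40 → δ ^ (1 - 2*σ) ≤ 1/80 →
      ∀ q : ℕ, (q : ℝ) ≤ (1/80) * δ ^ (2*σ - 1) →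
      ∀ t : ℝ, t = 2 * (q : ℝ) * δ ^ (-(2*σ)) →
        c * (∫ ξ : EuclideanSpace ℝ (Fin (n-1)), (∏ j, g δ σ (ξ j)) ^ 2) ≤
          ∫ x in {x : EuclideanSpace ℝ (Fin (n-1)) |
              Metric.infDist x {y : EuclideanSpace ℝ (Fin (n-1)) |
                ∀ j, ∃ p : ℕ, (p : ℝ) ≤ (1/40) * δ ^ (σ - 1) ∧ y j = (p : ℝ) * δ ^ (-σ)} ≤ r₀},
            ‖schrodingerSol n δ σ x t‖ ^ 2 := by
  have hnn : 0 < n := by omega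
  have hnR : (2:ℝ) ≤ (n:ℝ) := by exact_mod_cast hn
  have hn0 : (0:ℝ) < (n:ℝ) := by linarith
  refine ⟨(1/(8000 * (n:ℝ))) ^ (n-1), 1/2, by positivity, by norm_num, by norm_num, ?_⟩
  intro σ δ hσ0 hσh hδ0 hδ1 hhalf h40 h80 q hq t ht
  set m := n - 1 with hm
  have hm1 : 1 ≤ m := by omega
  set B := δ ^ (-σ) with hB
  set L := ⌊δ ^ (-σ)⌋₊ with hLdef
  set Np := ⌊(1/40) * δ ^ (σ-1)⌋₊ with hNpdef
  set r₁ : ℝ := 1/(100 * (n:ℝ)) with hr₁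
  have hr₁pos : 0 < r₁ := by rw [hr₁]; positivity
  have hr₁le : r₁ ≤ 1/100 := by
    rw [hr₁, div_le_div_iff₀ (by positivity) (by norm_num)]
    nlinarith
  -- power facts
  have hmul : ∀ a b : ℝ, δ ^ a * δ ^ b = δ ^ (a+b) := fun a b => (Real.rpow_add hδ0 a b).symm
  have hpow1 : ∀ a : ℝ, δ ^ a * δ = δ ^ (a+1) := fun a => by
    calc δ ^ a * δ = δ ^ a * δ ^ (1:ℝ) := by rw [Real.rpow_one]
      _ = δ ^ (a+1) := hmul a 1
  have hA0 : 0 < δ ^ σ := Real.rpow_pos_of_pos hδ0 σ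
  have hB0 : (0:ℝ) < B := Real.rpow_pos_of_pos hδ0 (-σ)
  have hAB : δ ^ σ * B = 1 := by
    rw [hB, hmul]; norm_num
  have hB2 : (2:ℝ) ≤ B := by nlinarith
  have hLB : (L:ℝ) ≤ B := Nat.floor_le hB0.le
  have hL2 : B/2 ≤ (L:ℝ) := by
    have := Nat.lt_floor_add_one B
    rw [← hLdef] at this
    linarith
  have hL1 : (0:ℝ) < (L:ℝ) := by linarith
  have h2δ : 2*δ ≤ δ ^ σ := by
    have h1 : δ^(1-σ) * δ^σ = δ := by
      rw [hmul, show (1-σ)+σ = 1 by ring, Real.rpow_one]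
    nlinarith
  have hkey3 : δ^(σ-1) * B * δ = 1 := by
    rw [hB, hmul, hpow1, show σ-1 + -σ + 1 = 0 by ring, Real.rpow_zero]
  have hNpl : ((Np:ℝ)) ≤ 1/40 * δ^(σ-1) := Nat.floor_le (by positivity)
  have hNpu : 1/40 * δ^(σ-1) < (Np:ℝ) + 1 := by
    have := Nat.lt_floor_add_one (1/40 * δ^(σ-1))
    rw [← hNpdef] at this
    exact_mod_cast this
  -- the sets
  set Sset := {y : EuclideanSpace ℝ (Fin m) |
      ∀ j, ∃ p : ℕ, (p : ℝ) ≤ 1/40 * δ ^ (σ - 1) ∧ y j = (p : ℝ) * B} with hSset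
  set Aset := {x : EuclideanSpace ℝ (Fin m) | Metric.infDist x Sset ≤ 1/2} with hAset
  set Iset : Set ℝ := ⋃ p ∈ Finset.range (Np+1), Set.Icc ((p:ℝ)*B - r₁) ((p:ℝ)*B + r₁)
    with hIset
  set Pset : Set (EuclideanSpace ℝ (Fin m)) := {x | ∀ j, x j ∈ Iset} with hPset
  show (1/(8000 * (n:ℝ))) ^ m * (∫ ξ : EuclideanSpace ℝ (Fin m), (∏ j, g δ σ (ξ j)) ^ 2)
      ≤ ∫ x in Aset, ‖schrodingerSol n δ σ x t‖ ^ 2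
  -- measurability and volume of Iset
  have hImeas : MeasurableSet Iset := Finset.measurableSet_biUnion _ fun p _ => measurableSet_Icc
  have hdisj : (↑(Finset.range (Np+1)) : Set ℕ).PairwiseDisjoint
      (fun p : ℕ => Set.Icc ((p:ℝ)*B - r₁) ((p:ℝ)*B + r₁)) := by
    have key : ∀ a b : ℕ, a < b →
        Disjoint (Set.Icc ((a:ℝ)*B - r₁) ((a:ℝ)*B + r₁))
          (Set.Icc ((b:ℝ)*B - r₁) ((b:ℝ)*B + r₁)) := by
      intro a b hab
      rw [Set.disjoint_left]
      intro y hy1 hy2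
      rw [Set.mem_Icc] at hy1 hy2
      have h1 : (a:ℝ) + 1 ≤ (b:ℝ) := by exact_mod_cast hab
      nlinarith [hy1.2, hy2.1, mul_le_mul_of_nonneg_right h1 hB0.le]
    intro p _ p' _ hne
    rcases hne.lt_or_gt with h | h
    · exact key _ _ h
    · exact (key _ _ h).symm
  have hIvol : volume Iset = (Np+1 : ℕ) * ENNReal.ofReal (2*r₁) := by
    rw [hIset, measure_biUnion_finset hdisj fun p _ => measurableSet_Icc]
    have : ∀ p ∈ Finset.range (Np+1),
        volume (Set.Icc ((p:ℝ)*B - r₁) ((p:ℝ)*B + r₁)) = ENNReal.ofReal (2*r₁) := by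
      intro p _
      rw [Real.volume_Icc]
      congr 1
      ring
    rw [Finset.sum_congr rfl this, Finset.sum_const, Finset.card_range, nsmul_eq_mul]
  -- volume of Pset
  have hPeq : Pset = (MeasurableEquiv.toLp 2 (Fin m → ℝ)).symm ⁻¹' (Set.univ.pi fun _ => Iset) := by
    ext x
    simp [hPset, Set.mem_pi]
  have hPmeas : MeasurableSet Pset := by
    rw [hPeq]
    exact (MeasurableEquiv.toLp 2 (Fin m → ℝ)).symm.measurable
      (MeasurableSet.univ_pi fun _ => hImeas)
  have hPvol : volume Pset = ((Np+1 : ℕ) * ENNReal.ofReal (2*r₁)) ^ m := by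
    rw [hPeq, (EuclideanSpace.volume_preserving_symm_measurableEquiv_toLp (Fin m)).measure_preimage
      (MeasurableSet.univ_pi fun _ => hImeas).nullMeasurableSet, volume_pi_pi]
    simp [hIvol, Finset.prod_const]
  have hPvolReal : (volume Pset).toReal = (((Np:ℝ)+1) * (2*r₁)) ^ m := by
    rw [hPvol, ENNReal.toReal_pow, ENNReal.toReal_mul, ENNReal.toReal_natCast,
      ENNReal.toReal_ofReal (by positivity)]
    push_cast
    ring
  -- extraction of lattice coordinates
  have hext : ∀ x ∈ Pset, ∀ j : Fin m, ∃ p : ℕ, p ≤ Np ∧ |x j - (p:ℝ)*B| ≤ r₁ := by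
    intro x hx j
    have hmem := hx j
    rw [hIset] at hmem
    simp only [Set.mem_iUnion, Finset.mem_range, Set.mem_Icc, exists_prop] at hmem
    obtain ⟨p, hp, hIcc⟩ := hmem
    exact ⟨p, by omega, abs_le.2 ⟨by linarith [hIcc.1], by linarith [hIcc.2]⟩⟩
  -- Pset ⊆ Aset
  have hPsub : Pset ⊆ Aset := by
    intro x hx
    choose pf hpf hdist using hext x hx
    have hyS : (WithLp.toLp 2 (fun j => (pf j : ℝ) * B) : EuclideanSpace ℝ (Fin m)) ∈ Sset := by
      intro j
      refine ⟨pf j, ?_, rfl⟩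
      calc ((pf j : ℕ) : ℝ) ≤ (Np : ℝ) := Nat.cast_le.2 (hpf j)
        _ ≤ 1/40 * δ^(σ-1) := hNpl
    show Metric.infDist x Sset ≤ 1/2
    calc Metric.infDist x Sset ≤ dist x (WithLp.toLp 2 (fun j => (pf j : ℝ) * B) : EuclideanSpace ℝ (Fin m)) :=
        Metric.infDist_le_dist_of_mem hyS
      _ ≤ 1/2 := by
        rw [EuclideanSpace.dist_eq]
        have hstep : ∀ j ∈ (Finset.univ : Finset (Fin m)),
            dist (x j) ((pf j : ℝ) * B) ^ 2 ≤ r₁^2 := by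
          intro j _
          rw [Real.dist_eq]
          exact pow_le_pow_left₀ (abs_nonneg _) (hdist j) 2
        have hsum : ∑ j : Fin m, dist (x j) ((pf j : ℝ) * B) ^ 2 ≤ (m:ℝ) * r₁^2 := by
          have h := Finset.sum_le_sum hstep
          rw [Finset.sum_const, Finset.card_univ, Fintype.card_fin, nsmul_eq_mul] at h
          exact h
        have hmr : (m:ℝ) * r₁^2 ≤ (1/2)^2 := by
          have hmn : (m:ℝ) ≤ (n:ℝ) := Nat.cast_le.2 (by omega)
          have hm0 : (0:ℝ) ≤ (m:ℝ) := Nat.cast_nonneg m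
          rw [hr₁, div_pow, one_pow, mul_one_div, div_le_iff₀ (by positivity : (0:ℝ) < (100*(n:ℝ))^2)]
          nlinarith
        have hfin := Real.sqrt_le_sqrt (le_trans hsum hmr)
        rw [Real.sqrt_sq (by norm_num : (0:ℝ) ≤ 1/2)] at hfin
        exact hfin
  -- pointwise lower bound on Pset
  have hlow : ∀ x ∈ Pset, ((δ*(L:ℝ))^m)^2 ≤ ‖schrodingerSol n δ σ x t‖^2 := by
    intro x hx
    have h1 : (δ*(L:ℝ))^m ≤ ‖schrodingerSol n δ σ x t‖ := by
      rw [factorization n δ σ t x, norm_prod]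
      have hterm : ∀ j ∈ (Finset.univ : Finset (Fin m)), δ*(L:ℝ) ≤ ‖u1 δ σ t (x j)‖ := by
        intro j _
        obtain ⟨p, hp, hd⟩ := hext x hx j
        have hxj : x j = (p:ℝ) * B + (x j - (p:ℝ)*B) := by ring
        rw [hxj, ht]
        refine u1_norm_lower δ σ hδ0 hδ1 q hq p ?_ _ (le_trans hd hr₁le)
        calc ((p:ℕ) : ℝ) ≤ (Np : ℝ) := Nat.cast_le.2 hp
          _ ≤ 1/40 * δ^(σ-1) := hNpl
      have hc : (δ*(L:ℝ))^m = ∏ _j : Fin m, (δ*(L:ℝ)) := by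
        rw [Finset.prod_const, Finset.card_univ, Fintype.card_fin]
      rw [hc]
      apply Finset.prod_le_prod
      · intro i _
        positivity
      · exact hterm
    have h0 : (0:ℝ) ≤ (δ*(L:ℝ))^m := by positivity
    exact pow_le_pow_left₀ h0 h1 2
  -- continuity of the solution
  have hcont : Continuous (fun x : EuclideanSpace ℝ (Fin m) => schrodingerSol n δ σ x t) := by
    have hfun : (fun x : EuclideanSpace ℝ (Fin m) => schrodingerSol n δ σ x t)
        = fun x => ∏ j : Fin m, u1 δ σ t (x j) := funext fun x => factorization n δ σ t x
    rw [hfun]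
    apply continuous_finset_prod
    intro j _
    exact (u1_continuous δ σ t).comp (PiLp.continuous_apply 2 _ j)
  -- Sset is nonempty
  have hS0 : (0 : EuclideanSpace ℝ (Fin m)) ∈ Sset := by
    rw [hSset]
    intro j
    exact ⟨0, by simp only [Nat.cast_zero]; positivity, by simp⟩
  -- Aset is measurable with finite volume
  have hAmeas : MeasurableSet Aset :=
    (isClosed_le (Metric.continuous_infDist_pt Sset) continuous_const).measurableSet
  have hAsub : Aset ⊆ Metric.closedBall 0 (Real.sqrt m * (1/40 * δ^(σ-1) * B) + 2) := by
    intro x hx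
    have hlt : Metric.infDist x Sset < 1 := lt_of_le_of_lt hx (by norm_num)
    obtain ⟨y, hyS, hyd⟩ := (Metric.infDist_lt_iff ⟨0, hS0⟩).1 hlt
    rw [Metric.mem_closedBall, dist_zero_right]
    have hynorm : ‖y‖ ≤ Real.sqrt m * (1/40*δ^(σ-1)*B) := by
      rw [EuclideanSpace.norm_eq]
      have hstep : ∀ j ∈ (Finset.univ : Finset (Fin m)),
          ‖y j‖^2 ≤ (1/40*δ^(σ-1)*B)^2 := by
        intro j _
        obtain ⟨p, hp1, hp2⟩ := hyS j
        rw [hp2, Real.norm_eq_abs, abs_of_nonneg (by positivity)]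
        apply pow_le_pow_left₀ (by positivity)
        exact mul_le_mul_of_nonneg_right hp1 hB0.le
      have hsum : ∑ j : Fin m, ‖y j‖^2 ≤ (m:ℝ) * (1/40*δ^(σ-1)*B)^2 := by
        have h := Finset.sum_le_sum hstep
        rw [Finset.sum_const, Finset.card_univ, Fintype.card_fin, nsmul_eq_mul] at h
        exact h
      have hs := Real.sqrt_le_sqrt hsum
      rw [Real.sqrt_mul (Nat.cast_nonneg m), Real.sqrt_sq (by positivity)] at hs
      exact hs
    rw [dist_eq_norm] at hyd
    calc ‖x‖ = ‖(x - y) + y‖ := by rw [sub_add_cancel]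
      _ ≤ ‖x - y‖ + ‖y‖ := norm_add_le _ _
      _ ≤ Real.sqrt m * (1/40*δ^(σ-1)*B) + 2 := by linarith
  have hAfin : volume Aset ≠ ⊤ :=
    ne_top_of_le_ne_top (IsCompact.measure_lt_top (isCompact_closedBall _ _)).ne
      (measure_mono hAsub)
  -- global bound
  have hbound : ∀ x : EuclideanSpace ℝ (Fin m),
      ‖schrodingerSol n δ σ x t‖ ≤ ((L:ℝ)*(2*δ))^m := by
    intro x
    rw [factorization n δ σ t x, norm_prod]
    have hc : ((L:ℝ)*(2*δ))^m = ∏ _j : Fin m, ((L:ℝ)*(2*δ)) := by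
      rw [Finset.prod_const, Finset.card_univ, Fintype.card_fin]
    rw [hc]
    apply Finset.prod_le_prod
    · intro i _
      exact norm_nonneg _
    · intro i _
      exact u1_norm_le δ σ t (x i) hδ0.le
  have hIntA : IntegrableOn (fun x => ‖schrodingerSol n δ σ x t‖^2) Aset volume := by
    apply Measure.integrableOn_of_bounded hAfin ((hcont.norm.pow 2).aestronglyMeasurable)
      (M := (((L:ℝ)*(2*δ))^m)^2)
    apply Filter.Eventually.of_forall
    intro x
    rw [Real.norm_eq_abs, Pi.pow_apply, abs_of_nonneg (by positivity)]
    exact pow_le_pow_left₀ (norm_nonneg _) (hbound x) 2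
  have hPfin : volume Pset ≠ ⊤ := ne_top_of_le_ne_top hAfin (measure_mono hPsub)
  -- assemble
  have hchain2 : ((δ*(L:ℝ))^m)^2 * (volume Pset).toReal
      ≤ ∫ x in Pset, ‖schrodingerSol n δ σ x t‖^2 :=
    by have := setIntegral_ge_of_const_le hPmeas hPfin hlow (hIntA.mono_set hPsub)
       rw [smul_eq_mul, mul_comm, measureReal_def] at this; exact this
  have hchain1 : (∫ x in Pset, ‖schrodingerSol n δ σ x t‖^2)
      ≤ ∫ x in Aset, ‖schrodingerSol n δ σ x t‖^2 :=
    setIntegral_mono_set hIntA (Filter.Eventually.of_forall fun x => by positivity)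
      (HasSubset.Subset.eventuallyLE hPsub)
  have hLHS : (∫ ξ : EuclideanSpace ℝ (Fin m), (∏ j, g δ σ (ξ j))^2) = ((L:ℝ)*(2*δ))^m := by
    have h1 : (fun ξ : EuclideanSpace ℝ (Fin m) => (∏ j, g δ σ (ξ j))^2)
        = fun ξ => ∏ j : Fin m, (g δ σ (ξ j))^2 := by
      funext ξ
      rw [← Finset.prod_pow]
    rw [h1, euclid_integral_prod (fun j s => (g δ σ s)^2)]
    have h2 : ∀ j ∈ (Finset.univ : Finset (Fin m)), (∫ s : ℝ, (g δ σ s)^2) = (L:ℝ)*(2*δ) := by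
      intro j _
      have hg2 : (fun s : ℝ => (g δ σ s)^2) = fun s => g δ σ s := by
        funext s
        exact g_sq δ σ hδ0 h2δ s
      rw [hg2, integral_g δ σ hδ0.le]
    rw [Finset.prod_congr rfl h2, Finset.prod_const, Finset.card_univ, Fintype.card_fin]
  rw [hLHS]
  -- numeric conclusion
  have hcore : 1/80 ≤ δ*(L:ℝ)*((Np:ℝ)+1) := by
    have e1 : (1:ℝ)/80 = (δ*B/2) * (1/40*δ^(σ-1)) := by
      linear_combination (-(1/80)) * hkey3
    rw [e1]
    apply mul_le_mul ?_ hNpu.le (by positivity) (by positivity)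
    nlinarith
  have hngoal : (1/8000)*((L:ℝ)*(2*δ)) ≤ (δ*(L:ℝ))^2 * (((Np:ℝ)+1)*(2*(1/100))) := by
    have h5 := mul_le_mul_of_nonneg_left hcore
      (show (0:ℝ) ≤ δ*(L:ℝ)*(2*(1/100)) by positivity)
    nlinarith [h5]
  have hxle : (1/(8000*(n:ℝ)))*((L:ℝ)*(2*δ)) ≤ (δ*(L:ℝ))^2 * (((Np:ℝ)+1)*(2*r₁)) := by
    rw [hr₁]
    calc (1/(8000*(n:ℝ)))*((L:ℝ)*(2*δ))
        = ((1/8000)*((L:ℝ)*(2*δ))) * ((n:ℝ))⁻¹ := by ring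
      _ ≤ ((δ*(L:ℝ))^2 * (((Np:ℝ)+1)*(2*(1/100)))) * ((n:ℝ))⁻¹ :=
          mul_le_mul_of_nonneg_right hngoal (by positivity)
      _ = (δ*(L:ℝ))^2 * (((Np:ℝ)+1)*(2*(1/(100*(n:ℝ))))) := by
          field_simp
  calc (1/(8000 * (n:ℝ))) ^ m * ((L:ℝ)*(2*δ))^m
      = ((1/(8000*(n:ℝ)))*((L:ℝ)*(2*δ)))^m := by rw [← mul_pow]
    _ ≤ ((δ*(L:ℝ))^2 * (((Np:ℝ)+1)*(2*r₁)))^m := pow_le_pow_left₀ (by positivity) hxle m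
    _ = ((δ*(L:ℝ))^m)^2 * ((((Np:ℝ)+1)*(2*r₁))^m) := by
        rw [mul_pow, ← pow_mul, ← pow_mul, Nat.mul_comm]
    _ = ((δ*(L:ℝ))^m)^2 * (volume Pset).toReal := by rw [hPvolReal]
    _ ≤ ∫ x in Pset, ‖schrodingerSol n δ σ x t‖^2 := hchain2
    _ ≤ ∫ x in Aset, ‖schrodingerSol n δ σ x t‖^2 := hchain1
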